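/- If ρ is a good involution of a connected quandle Q and ρ fixes some element x ∈ Q, then ρ is the identity map on Q. -/

import Mathlib

/-- A quandle: a set with a binary operation `op`, its dual operation `dual`
(so that right translations are bijections), idempotence, and self-distributivity. -/
structure Quandle' (Q : Type*) where
  op : Q → Q → Q
  dual : Q → Q → Q
  idem : ∀ a, op a a = a
  op_dual : ∀ a b, op (dual a b) b = a
  dual_op : ∀ a b, dual (op a b) b = a
  distrib : ∀ a b c, op (op a b) c = op (op a c) (op b c)

/-- `ρ` is a good involution of the quandle with operation `op`. -/
def IsGoodInvolution {Q : Type*} (op : Q → Q → Q) (ρ : Q → Q) : Prop :=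
  Function.Involutive ρ ∧ (∀ a b, ρ (op a b) = op (ρ a) b) ∧
    (∀ a b, op (op a (ρ b)) b = a)

/-- The right translation `S_b : a ↦ a * b`, a bijection of `Q`. -/
def rightTr {Q : Type*} (q : Quandle' Q) (b : Q) : Equiv.Perm Q where
  toFun a := q.op a b
  invFun a := q.dual a b
  left_inv a := q.dual_op a b
  right_inv a := q.op_dual a b

/-- The inner automorphism group of a quandle: the subgroup of permutations
generated by the right translations. -/
def Inn {Q : Type*} (q : Quandle' Q) : Subgroup (Equiv.Perm Q) :=
  Subgroup.closure (Set.range (rightTr q))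

/-- If a good involution of a connected quandle fixes some element,
then it is the identity. -/
theorem stmt12 {Q : Type*} (q : Quandle' Q)
    (hconn : ∀ a b : Q, ∃ g ∈ Inn q, g a = b)
    (ρ : Q → Q) (hρ : IsGoodInvolution q.op ρ)
    (x : Q) (hx : ρ x = x) : ρ = id := by

  obtain ⟨hinv, hcomm, _⟩ := hρ
  have hdual : ∀ a b, ρ (q.dual a b) = q.dual (ρ a) b := by
    intro a b
    have h1 : q.op (ρ (q.dual a b)) b = q.op (q.dual (ρ a) b) b := by
      rw [← hcomm, q.op_dual, q.op_dual]
    have := (rightTr q b).injective h1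
    exact this
  have key : ∀ g ∈ Inn q, ∀ a, ρ (g a) = g (ρ a) := by
    intro g hg
    refine Subgroup.closure_induction ?_ ?_ ?_ ?_ hg
    · rintro _ ⟨b, rfl⟩ a
      exact hcomm a b
    · intro a; rfl
    · intro g h _ _ hgc hhc a
      simp only [Equiv.Perm.mul_apply]
      rw [hgc, hhc]
    · intro g _ hgc a
      have := hgc (g⁻¹ a)
      simp only [Equiv.Perm.coe_inv, Equiv.apply_symm_apply] at this
      rw [this]; simp only [Equiv.Perm.coe_inv, Equiv.symm_apply_apply]
  funext b
  obtain ⟨g, hg, hgb⟩ := hconn x b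
  simp only [id]
  rw [← hgb, key g hg, hx]
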